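/- Let λ > 0 with θ_λ ∈ (0, π/2) defined by tan θ_λ = 1/λ, let m ∈ (0, θ_λ], let μ_L, μ_D : (0, m] → ℝ be functions, and let (ψ, a_c) be a correction pair (with ψ extended to ℝ by ψ((x)_+)). Suppose φ ∈ (0, m], a ∈ ℝ with a ≠ 1, and a' ∈ ℝ satisfy the corrected BEM system. Then (A) a/(1 − a) + (sin θ_λ · sin φ / cos(θ_λ − φ)) · ψ((a − a_c)_+)/(1 − a)² = g(φ), and (B) μ_L(φ) − tan(θ_λ − φ) μ_D(φ) = μ_G(φ) + (cos θ_λ · sin² φ / cos(θ_λ − φ)) · ψ((a − a_c)_+)/(1 − a)². -/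

import Mathlib

open Real Set

/-- The function `g(φ) = cot φ · tan(θ − φ) + (μ_D(φ)/sin φ)(1 + cot φ · tan(θ − φ))`. -/
noncomputable def gBEM (θ : ℝ) (μD : ℝ → ℝ) (φ : ℝ) : ℝ :=
  (Real.cos φ / Real.sin φ) * Real.tan (θ - φ) +
    (μD φ / Real.sin φ) * (1 + (Real.cos φ / Real.sin φ) * Real.tan (θ - φ))

/-- The implicit equation `E(φ, a)`:
`a/(1−a) + (sin θ · sin φ / cos(θ−φ)) · ψ((a−a_c)_+)/(1−a)² = g(φ)`. -/
def EBEM (θ : ℝ) (μD ψ : ℝ → ℝ) (ac φ a : ℝ) : Prop :=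
  a / (1 - a) +
      (Real.sin θ * Real.sin φ / Real.cos (θ - φ)) * ψ (max (a - ac) 0) / (1 - a) ^ 2
    = gBEM θ μD φ


/-- If `(φ, a, a')` solves the corrected BEM system, then
(A) `a` solves the implicit equation `E(φ, a)`, and
(B) `μ_L(φ) − tan(θ−φ)·μ_D(φ) = μ_G(φ) + (cos θ · sin²φ / cos(θ−φ)) · ψ((a−a_c)_+)/(1−a)²`. -/
theorem bem_corrected_necessity
    (lam θ m : ℝ) (hlam : 0 < lam) (hθ : θ ∈ Ioo 0 (π / 2))
    (htan : Real.tan θ = 1 / lam) (hm : m ∈ Ioc 0 θ)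
    (μL μD : ℝ → ℝ)
    (ac : ℝ) (hac : ac ∈ Ioo (0 : ℝ) 1)
    (ψ : ℝ → ℝ) (hψc : ContinuousOn ψ (Ici 0)) (hψmono : MonotoneOn ψ (Ici 0))
    (hψ0 : ψ 0 = 0) (hψnn : ∀ x ∈ Ici (0 : ℝ), 0 ≤ ψ x)
    (φ a a' : ℝ) (hφ : φ ∈ Ioc 0 m) (ha : a ≠ 1)
    (h1 : Real.tan φ = (1 - a) / (lam * (1 + a')))
    (h2 : a / (1 - a)
        = (μL φ * Real.cos φ + μD φ * Real.sin φ) / Real.sin φ ^ 2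
          - ψ (max (a - ac) 0) / (1 - a) ^ 2)
    (h3 : a' / (1 - a)
        = (μL φ * Real.sin φ - μD φ * Real.cos φ) / (lam * Real.sin φ ^ 2)) :
    EBEM θ μD ψ ac φ a ∧
    μL φ - Real.tan (θ - φ) * μD φ
      = Real.sin φ * Real.tan (θ - φ) +
        (Real.cos θ * Real.sin φ ^ 2 / Real.cos (θ - φ)) * ψ (max (a - ac) 0) / (1 - a) ^ 2 := by
  have hφ0 : 0 < φ := hφ.1
  have hφθ : φ ≤ θ := hφ.2.trans hm.2
  have hpi := Real.pi_pos
  have hφ2 : φ < π / 2 := lt_of_le_of_lt hφθ hθ.2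
  have hs : 0 < Real.sin φ := Real.sin_pos_of_pos_of_lt_pi hφ0 (by linarith)
  have hc : 0 < Real.cos φ := Real.cos_pos_of_mem_Ioo ⟨by linarith, hφ2⟩
  have hS : 0 < Real.sin θ := Real.sin_pos_of_pos_of_lt_pi hθ.1 (by linarith [hθ.2])
  have hC : 0 < Real.cos θ := Real.cos_pos_of_mem_Ioo ⟨by linarith [hθ.1], hθ.2⟩
  have hcd : 0 < Real.cos (θ - φ) :=
    Real.cos_pos_of_mem_Ioo ⟨by linarith [hθ.2], by linarith [hθ.2]⟩
  have hu : (1 : ℝ) - a ≠ 0 := sub_ne_zero.mpr (Ne.symm ha)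
  have hlsc : lam * Real.sin θ = Real.cos θ := by
    rw [Real.tan_eq_sin_div_cos] at htan
    field_simp at htan
    linarith
  have ha' : 1 + a' ≠ 0 := by
    intro h
    rw [h, mul_zero, div_zero, Real.tan_eq_sin_div_cos] at h1
    have := div_pos hs hc
    linarith
  have h1p : lam * (1 + a') * Real.sin φ = (1 - a) * Real.cos φ := by
    rw [Real.tan_eq_sin_div_cos] at h1
    field_simp at h1
    linear_combination h1
  have P2p : (μL φ * Real.cos φ + μD φ * Real.sin φ) * (1 - a) ^ 2
      = a * (1 - a) * Real.sin φ ^ 2 + Real.sin φ ^ 2 * ψ (max (a - ac) 0) := by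
    field_simp at h2
    refine mul_right_cancel₀ hu ?_
    linear_combination (-(1 - a)) * h2
  have P3p : (μL φ * Real.sin φ - μD φ * Real.cos φ) * (1 - a)
      = lam * a' * Real.sin φ ^ 2 := by
    field_simp at h3
    linear_combination -h3
  have hcd2 : Real.cos θ * Real.cos φ + Real.sin θ * Real.sin φ ≠ 0 := by
    rw [← Real.cos_sub]; exact hcd.ne'
  have keyB : (μL φ * (Real.cos θ * Real.cos φ + Real.sin θ * Real.sin φ)
        - μD φ * (Real.sin θ * Real.cos φ - Real.cos θ * Real.sin φ)) * (1 - a) ^ 2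
      = Real.sin φ * (Real.sin θ * Real.cos φ - Real.cos θ * Real.sin φ) * (1 - a) ^ 2
        + Real.cos θ * Real.sin φ ^ 2 * ψ (max (a - ac) 0) := by
    linear_combination Real.cos θ * P2p + Real.sin θ * (1 - a) * P3p
      + Real.sin θ * Real.sin φ * (1 - a) * h1p - Real.sin φ ^ 2 * (1 - a) * hlsc
  have keyA : a * (1 - a) * Real.sin φ ^ 2 * (Real.cos θ * Real.cos φ + Real.sin θ * Real.sin φ)
        + Real.sin θ * Real.sin φ ^ 3 * ψ (max (a - ac) 0)
      = Real.cos φ * Real.sin φ * (Real.sin θ * Real.cos φ - Real.cos θ * Real.sin φ) * (1 - a) ^ 2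
        + μD φ * (Real.sin φ * (Real.cos θ * Real.cos φ + Real.sin θ * Real.sin φ)
            + Real.cos φ * (Real.sin θ * Real.cos φ - Real.cos θ * Real.sin φ)) * (1 - a) ^ 2 := by
    linear_combination (-(Real.sin θ * Real.sin φ)) * P2p
      + Real.sin θ * Real.cos φ * (1 - a) * P3p
      + Real.sin θ * Real.cos φ * Real.sin φ * (1 - a) * h1p
      - Real.cos φ * Real.sin φ ^ 2 * (1 - a) * hlsc
  constructor
  · unfold EBEM gBEM
    rw [Real.tan_eq_sin_div_cos, Real.sin_sub, Real.cos_sub]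
    field_simp
    linear_combination keyA
  · rw [Real.tan_eq_sin_div_cos, Real.sin_sub, Real.cos_sub]
    field_simp
    linear_combination keyB
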